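/- If P1, P2 ∈ SBrNDC and P1∖A_H ≈_b P2∖A_H, then P1/A_H ≈_b P2/A_H. -/
import Mathlib


namespace SecurityNI

/-- Process terms: `0`, action prefix (`none` = τ, `some a` = observable action),
choice, CSP-style parallel composition with synchronization set, restriction,
hiding, and constants (whose defining equations are given by an environment). -/
inductive Proc (A : Type) (C : Type) : Type where
  | nil : Proc A C
  | pre : Option A → Proc A C → Proc A C
  | choice : Proc A C → Proc A C → Proc A C
  | par : Set A → Proc A C → Proc A C → Proc A C
  | restrict : Proc A C → Set A → Proc A C
  | hide : Proc A C → Set A → Proc A C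
  | const : C → Proc A C

variable {A C : Type}

/-- A process term is guarded when every constant occurrence is in the scope
of an action prefix operator. -/
def Guarded : Proc A C → Prop
  | .nil => True
  | .pre _ _ => True
  | .choice p q => Guarded p ∧ Guarded q
  | .par _ p q => Guarded p ∧ Guarded q
  | .restrict p _ => Guarded p
  | .hide p _ => Guarded p
  | .const _ => False

/-- Operational semantics, parameterized by the defining equations `env` of
the constants.  Labels are `Option A`, with `none` playing the role of τ. -/
inductive Trans (env : C → Proc A C) : Proc A C → Option A → Proc A C → Prop where
  | pre (a : Option A) (p : Proc A C) : Trans env (.pre a p) a p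
  | choiceL {p q a p'} (h : Trans env p a p') : Trans env (.choice p q) a p'
  | choiceR {p q a q'} (h : Trans env q a q') : Trans env (.choice p q) a q'
  | parL {L p q a p'} (h : Trans env p a p') (hn : ∀ x, a = some x → x ∉ L) :
      Trans env (.par L p q) a (.par L p' q)
  | parR {L p q a q'} (h : Trans env q a q') (hn : ∀ x, a = some x → x ∉ L) :
      Trans env (.par L p q) a (.par L p q')
  | sync {L p q x p' q'} (h1 : Trans env p (some x) p') (h2 : Trans env q (some x) q')
      (hx : x ∈ L) : Trans env (.par L p q) (some x) (.par L p' q')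
  | res {p a p' L} (h : Trans env p a p') (hn : ∀ x, a = some x → x ∉ L) :
      Trans env (.restrict p L) a (.restrict p' L)
  | hideIn {p x p' L} (h : Trans env p (some x) p') (hx : x ∈ L) :
      Trans env (.hide p L) none (.hide p' L)
  | hideOut {p a p' L} (h : Trans env p a p') (hn : ∀ x, a = some x → x ∉ L) :
      Trans env (.hide p L) a (.hide p' L)
  | const {c a p'} (h : Trans env (env c) a p') : Trans env (.const c) a p'

section LTS

variable {S : Type} (tr : S → Option A → S → Prop)

/-- Finitely many (possibly zero) τ-transitions. -/
def TauStar : S → S → Prop :=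
  Relation.ReflTransGen (fun s s' => tr s none s')

/-- `B` is a branching bisimulation. -/
def IsBranchingBisim (B : S → S → Prop) : Prop :=
  Symmetric B ∧
    ∀ s1 s2, B s1 s2 → ∀ a s1', tr s1 a s1' →
      (a = none ∧ B s1' s2) ∨
      (∃ s2b s2', TauStar tr s2 s2b ∧ tr s2b a s2' ∧ B s1 s2b ∧ B s1' s2')

/-- Branching bisimilarity `≈_b`. -/
def BrBisim (s1 s2 : S) : Prop :=
  ∃ B, IsBranchingBisim tr B ∧ B s1 s2

/-- `B` is a weak bisimulation. -/
def IsWeakBisim (B : S → S → Prop) : Prop :=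
  Symmetric B ∧
    ∀ s1 s2, B s1 s2 →
      (∀ s1', tr s1 none s1' → ∃ s2', TauStar tr s2 s2' ∧ B s1' s2') ∧
      (∀ x s1', tr s1 (some x) s1' →
        ∃ t t' s2', TauStar tr s2 t ∧ tr t (some x) t' ∧ TauStar tr t' s2' ∧ B s1' s2')

/-- Weak bisimilarity `≈`. -/
def WeakBisim (s1 s2 : S) : Prop :=
  ∃ B, IsWeakBisim tr B ∧ B s1 s2

/-- Reachability via finitely many transitions. -/
def Reach : S → S → Prop :=
  Relation.ReflTransGen (fun s s' => ∃ a, tr s a s')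

end LTS

section Security

variable (env : C → Proc A C) (AH : Set A)

/-- `P ∈ BrSNNI` iff `P∖A_H ≈_b P/A_H`. -/
def BrSNNI (p : Proc A C) : Prop :=
  BrBisim (Trans env) (.restrict p AH) (.hide p AH)

/-- All processes reachable from `q` perform only actions in `AH`. -/
def HighOnly (q : Proc A C) : Prop :=
  ∀ q', Reach (Trans env) q q' → ∀ a q'', Trans env q' a q'' → ∃ h ∈ AH, a = some h

/-- `P ∈ BrNDC` iff `P∖A_H ≈_b ((P ∥_L Q)/L)∖A_H` for every high-level `Q`
and every `L ⊆ A_H`. -/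
def BrNDC (p : Proc A C) : Prop :=
  ∀ q, HighOnly env AH q → ∀ L, L ⊆ AH →
    BrBisim (Trans env) (.restrict p AH) (.restrict (.hide (.par L p q) L) AH)

/-- `P ∈ SBrSNNI` iff every reachable process is BrSNNI. -/
def SBrSNNI (p : Proc A C) : Prop :=
  ∀ p', Reach (Trans env) p p' → BrSNNI env AH p'

/-- `P ∈ P_BrNDC` iff every reachable process is BrNDC. -/
def PBrNDC (p : Proc A C) : Prop :=
  ∀ p', Reach (Trans env) p p' → BrNDC env AH p'

/-- `P ∈ SBrNDC` iff for every reachable `P'` and every high transition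
`P' --h→ P''`, `P'∖A_H ≈_b P''∖A_H`. -/
def SBrNDC (p : Proc A C) : Prop :=
  ∀ p' p'', Reach (Trans env) p p' → ∀ h ∈ AH, Trans env p' (some h) p'' →
    BrBisim (Trans env) (.restrict p' AH) (.restrict p'' AH)

/-- `P ∈ BSNNI` iff `P∖A_H ≈ P/A_H`. -/
def BSNNI (p : Proc A C) : Prop :=
  WeakBisim (Trans env) (.restrict p AH) (.hide p AH)

/-- `P ∈ BNDC` iff `P∖A_H ≈ ((P ∥_L Q)/L)∖A_H` for every high-level `Q`
and every `L ⊆ A_H`. -/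
def BNDC (p : Proc A C) : Prop :=
  ∀ q, HighOnly env AH q → ∀ L, L ⊆ AH →
    WeakBisim (Trans env) (.restrict p AH) (.restrict (.hide (.par L p q) L) AH)

/-- `P ∈ SBSNNI` iff every reachable process is BSNNI. -/
def SBSNNI (p : Proc A C) : Prop :=
  ∀ p', Reach (Trans env) p p' → BSNNI env AH p'

/-- `P ∈ P_BNDC` iff every reachable process is BNDC. -/
def PBNDC (p : Proc A C) : Prop :=
  ∀ p', Reach (Trans env) p p' → BNDC env AH p'

/-- `P ∈ SBNDC` iff for every reachable `P'` and every high transition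
`P' --h→ P''`, `P'∖A_H ≈ P''∖A_H`. -/
def SBNDC (p : Proc A C) : Prop :=
  ∀ p' p'', Reach (Trans env) p p' → ∀ h ∈ AH, Trans env p' (some h) p'' →
    WeakBisim (Trans env) (.restrict p' AH) (.restrict p'' AH)

/-- No high-level actions occur in `p`: no process reachable from `p`
can perform a high-level action. -/
def NoHigh (p : Proc A C) : Prop :=
  ∀ p', Reach (Trans env) p p' → ∀ h ∈ AH, ∀ p'', ¬ Trans env p' (some h) p''

end Security

section SemiAux

variable {A S : Type} (tr : S → Option A → S → Prop)

/-- Semi-branching bisimulation (Basten). -/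
def IsSemiBisim (B : S → S → Prop) : Prop :=
  Symmetric B ∧
    ∀ s1 s2, B s1 s2 → ∀ a s1', tr s1 a s1' →
      ∃ s2b, TauStar tr s2 s2b ∧ B s1 s2b ∧
        ((a = none ∧ B s1' s2b) ∨ ∃ s2', tr s2b a s2' ∧ B s1' s2')

/-- Semi-branching bisimilarity. -/
def SB (s1 s2 : S) : Prop := ∃ B, IsSemiBisim tr B ∧ B s1 s2

variable {tr}

theorem isSemi_of_isBranching {B : S → S → Prop} (hB : IsBranchingBisim tr B) :
    IsSemiBisim tr B := by
  refine ⟨hB.1, fun s1 s2 h a s1' hs => ?_⟩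
  rcases hB.2 s1 s2 h a s1' hs with ⟨ha, hB'⟩ | ⟨s2b, s2', h1, h2, h3, h4⟩
  · exact ⟨s2, Relation.ReflTransGen.refl, h, Or.inl ⟨ha, hB'⟩⟩
  · exact ⟨s2b, h1, h3, Or.inr ⟨s2', h2, h4⟩⟩

theorem SB_symm {s t : S} (h : SB tr s t) : SB tr t s := by
  rcases h with ⟨B, hB, hst⟩
  exact ⟨B, hB, hB.1 hst⟩

theorem SB_isSemi : IsSemiBisim tr (SB tr) := by
  refine ⟨fun _ _ h => SB_symm h, fun s1 s2 h a s1' hs => ?_⟩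
  rcases h with ⟨B, hB, hst⟩
  rcases hB.2 s1 s2 hst a s1' hs with ⟨s2b, h1, h2, h3 | ⟨s2', h4, h5⟩⟩
  · exact ⟨s2b, h1, ⟨B, hB, h2⟩, Or.inl ⟨h3.1, ⟨B, hB, h3.2⟩⟩⟩
  · exact ⟨s2b, h1, ⟨B, hB, h2⟩, Or.inr ⟨s2', h4, ⟨B, hB, h5⟩⟩⟩

/-- τ-paths are propagated across a semi-branching bisimulation. -/
theorem taustar_propagate {B : S → S → Prop} (hB : IsSemiBisim tr B)
    {s t : S} (h : B s t) {s' : S} (hp : TauStar tr s s') :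
    ∃ t', TauStar tr t t' ∧ B s' t' := by
  induction hp with
  | refl => exact ⟨t, Relation.ReflTransGen.refl, h⟩
  | tail _ step ih =>
    rcases ih with ⟨t1, ht1, hbt1⟩
    rcases hB.2 _ _ hbt1 none _ step with ⟨t2, h1, _, ⟨_, h3⟩ | ⟨t3, h4, h5⟩⟩
    · exact ⟨t2, ht1.trans h1, h3⟩
    · exact ⟨t3, (ht1.trans h1).tail h4, h5⟩

/-- Stuttering property of semi-branching bisimilarity. -/
theorem SB_stutter {s t u th : S} (h1 : SB tr s t) (h2 : SB tr s th)
    (p1 : TauStar tr t u) (p2 : TauStar tr u th) : SB tr s u := by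
  classical
  set R : S → S → Prop := fun x y =>
    SB tr x y ∨
    (∃ t th, SB tr x t ∧ SB tr x th ∧ TauStar tr t y ∧ TauStar tr y th) ∨
    (∃ t th, SB tr y t ∧ SB tr y th ∧ TauStar tr t x ∧ TauStar tr x th) with hR
  have hRsemi : IsSemiBisim tr R := by
    constructor
    · intro x y hxy
      rcases hxy with h | h | h
      · exact Or.inl (SB_symm h)
      · exact Or.inr (Or.inr h)
      · exact Or.inr (Or.inl h)
    · intro x y hxy a x' hx
      rcases hxy with h | ⟨t0, th0, hst, hsth, q1, q2⟩ | ⟨t0, th0, hst, hsth, q1, q2⟩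
      · rcases SB_isSemi.2 _ _ h a x' hx with ⟨yb, hy1, hy2, hy3 | ⟨y', hy4, hy5⟩⟩
        · exact ⟨yb, hy1, Or.inl hy2, Or.inl ⟨hy3.1, Or.inl hy3.2⟩⟩
        · exact ⟨yb, hy1, Or.inl hy2, Or.inr ⟨y', hy4, Or.inl hy5⟩⟩
      · -- x SB-related to th0, y ⟹ th0
        rcases SB_isSemi.2 _ _ hsth a x' hx with ⟨v, hv1, hv2, hv3 | ⟨v', hv4, hv5⟩⟩
        · exact ⟨v, q2.trans hv1, Or.inl hv2, Or.inl ⟨hv3.1, Or.inl hv3.2⟩⟩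
        · exact ⟨v, q2.trans hv1, Or.inl hv2, Or.inr ⟨v', hv4, Or.inl hv5⟩⟩
      · -- y SB-related to t0, t0 ⟹ x
        have hts : SB tr t0 y := SB_symm hst
        rcases taustar_propagate SB_isSemi hts q1 with ⟨y1, hy1, hxy1⟩
        rcases SB_isSemi.2 _ _ hxy1 a x' hx with ⟨yb, hb1, hb2, hb3 | ⟨y', hb4, hb5⟩⟩
        · exact ⟨yb, hy1.trans hb1, Or.inl hb2, Or.inl ⟨hb3.1, Or.inl hb3.2⟩⟩
        · exact ⟨yb, hy1.trans hb1, Or.inl hb2, Or.inr ⟨y', hb4, Or.inl hb5⟩⟩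
  exact ⟨R, hRsemi, Or.inr (Or.inl ⟨t, th, h1, h2, p1, p2⟩)⟩

/-- Semi-branching bisimilarity is a branching bisimulation. -/
theorem SB_isBranching : IsBranchingBisim tr (SB tr) := by
  refine ⟨fun _ _ h => SB_symm h, fun s1 s2 h a s1' hs => ?_⟩
  rcases SB_isSemi.2 _ _ h a s1' hs with ⟨s2b, h1, h2, ⟨ha, h3⟩ | ⟨s2', h4, h5⟩⟩
  · subst ha
    cases h1 with
    | refl => exact Or.inl ⟨rfl, h3⟩
    | tail hpre step =>
      refine Or.inr ⟨_, s2b, hpre, step, ?_, h3⟩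
      exact SB_stutter h h2 hpre (Relation.ReflTransGen.single step)
  · exact Or.inr ⟨s2b, s2', h1, h4, h2, h5⟩

theorem comp_transfer {B1 B2 : S → S → Prop} (hB1 : IsSemiBisim tr B1)
    (hB2 : IsSemiBisim tr B2) {s t u : S} (h1 : B1 s t) (h2 : B2 t u)
    {a : Option A} {s' : S} (hs : tr s a s') :
    ∃ ub, TauStar tr u ub ∧ (∃ m, B1 s m ∧ B2 m ub) ∧
      ((a = none ∧ ∃ m, B1 s' m ∧ B2 m ub) ∨
        ∃ u', tr ub a u' ∧ ∃ m, B1 s' m ∧ B2 m u') := by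
  rcases hB1.2 _ _ h1 a s' hs with ⟨th, p1, q1, ⟨ha, q2⟩ | ⟨t', q3, q4⟩⟩
  · rcases taustar_propagate hB2 h2 p1 with ⟨ub, pu, hthub⟩
    exact ⟨ub, pu, ⟨th, q1, hthub⟩, Or.inl ⟨ha, th, q2, hthub⟩⟩
  · rcases taustar_propagate hB2 h2 p1 with ⟨uh, pu, hthuh⟩
    rcases hB2.2 _ _ hthuh a t' q3 with ⟨ub, r1, r2, ⟨ha, r3⟩ | ⟨u', r4, r5⟩⟩
    · exact ⟨ub, pu.trans r1, ⟨th, q1, r2⟩, Or.inl ⟨ha, t', q4, r3⟩⟩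
    · exact ⟨ub, pu.trans r1, ⟨th, q1, r2⟩, Or.inr ⟨u', r4, t', q4, r5⟩⟩

theorem SB_trans {s t u : S} (h1 : SB tr s t) (h2 : SB tr t u) : SB tr s u := by
  rcases h1 with ⟨B1, hB1, hb1⟩
  rcases h2 with ⟨B2, hB2, hb2⟩
  set R : S → S → Prop := fun x y =>
    (∃ m, B1 x m ∧ B2 m y) ∨ (∃ m, B2 x m ∧ B1 m y) with hRdef
  have hRsemi : IsSemiBisim tr R := by
    constructor
    · intro x y hxy
      rcases hxy with ⟨m, hm1, hm2⟩ | ⟨m, hm1, hm2⟩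
      · exact Or.inr ⟨m, hB2.1 hm2, hB1.1 hm1⟩
      · exact Or.inl ⟨m, hB1.1 hm2, hB2.1 hm1⟩
    · intro x y hxy a x' hx
      rcases hxy with ⟨m, hm1, hm2⟩ | ⟨m, hm1, hm2⟩
      · rcases comp_transfer hB1 hB2 hm1 hm2 hx with ⟨ub, p, q, ⟨ha, r⟩ | ⟨u', r1, r2⟩⟩
        · exact ⟨ub, p, Or.inl q, Or.inl ⟨ha, Or.inl r⟩⟩
        · exact ⟨ub, p, Or.inl q, Or.inr ⟨u', r1, Or.inl r2⟩⟩
      · rcases comp_transfer hB2 hB1 hm1 hm2 hx with ⟨ub, p, q, ⟨ha, r⟩ | ⟨u', r1, r2⟩⟩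
        · exact ⟨ub, p, Or.inr q, Or.inl ⟨ha, Or.inr r⟩⟩
        · exact ⟨ub, p, Or.inr q, Or.inr ⟨u', r1, Or.inr r2⟩⟩
  exact ⟨R, hRsemi, Or.inl ⟨t, hb1, hb2⟩⟩

theorem brBisim_iff_SB {s t : S} : BrBisim tr s t ↔ SB tr s t := by
  constructor
  · rintro ⟨B, hB, hst⟩
    exact ⟨B, isSemi_of_isBranching hB, hst⟩
  · intro h
    exact ⟨SB tr, SB_isBranching, h⟩

end SemiAux

section ProcAux

variable {A C : Type} {env : C → Proc A C} {AH : Set A}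

theorem taustar_restrict_inv {p : Proc A C} {s : Proc A C}
    (h : TauStar (Trans env) (Proc.restrict p AH) s) :
    ∃ p', s = Proc.restrict p' AH ∧ TauStar (Trans env) p p' := by
  induction h with
  | refl => exact ⟨p, rfl, Relation.ReflTransGen.refl⟩
  | tail _ step ih =>
    rcases ih with ⟨p1, rfl, hp1⟩
    cases step with
    | res hstep _ => exact ⟨_, rfl, hp1.tail hstep⟩

theorem taustar_hide_lift {p q : Proc A C}
    (h : TauStar (Trans env) p q) :
    TauStar (Trans env) (Proc.hide p AH) (Proc.hide q AH) := by
  induction h with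
  | refl => exact Relation.ReflTransGen.refl
  | tail _ step ih =>
    exact ih.tail (Trans.hideOut step (fun x hx => by cases hx))

theorem reach_trans_step {P p p' : Proc A C} {a : Option A}
    (h : Reach (Trans env) P p) (hs : Trans env p a p') :
    Reach (Trans env) P p' :=
  h.tail ⟨a, hs⟩

theorem reach_taustar {P p p' : Proc A C}
    (h : Reach (Trans env) P p) (hs : TauStar (Trans env) p p') :
    Reach (Trans env) P p' := by
  induction hs with
  | refl => exact h
  | tail _ step ih => exact ih.tail ⟨none, step⟩

/-- The key relation: pairs of hidden reachable processes whose restrictions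
are semi-branching bisimilar. -/
def HCore (env : C → Proc A C) (AH : Set A) (Pa Pb : Proc A C)
    (x y : Proc A C) : Prop :=
  ∃ p q, x = Proc.hide p AH ∧ y = Proc.hide q AH ∧
    Reach (Trans env) Pa p ∧ Reach (Trans env) Pb q ∧
    SB (Trans env) (Proc.restrict p AH) (Proc.restrict q AH)

theorem hcore_transfer {Pa Pb : Proc A C} (ha : SBrNDC env AH Pa)
    (R : Proc A C → Proc A C → Prop)
    (hR : ∀ u v, HCore env AH Pa Pb u v → R u v)
    {x y : Proc A C} (hxy : HCore env AH Pa Pb x y)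
    {a : Option A} {x' : Proc A C} (hx : Trans env x a x') :
    (a = none ∧ R x' y) ∨
      ∃ yb y', TauStar (Trans env) y yb ∧ Trans env yb a y' ∧
        R x yb ∧ R x' y' := by
  rcases hxy with ⟨p, q, rfl, rfl, hrp, hrq, hsb⟩
  cases hx with
  | hideIn hstep hmem =>
    -- high action hidden: use SBrNDC
    rename_i x0 p'
    have hnd : SB (Trans env) (Proc.restrict p AH) (Proc.restrict p' AH) :=
      brBisim_iff_SB.mp (ha p p' hrp x0 hmem hstep)
    refine Or.inl ⟨rfl, hR _ _ ⟨p', q, rfl, rfl, reach_trans_step hrp hstep, hrq, ?_⟩⟩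
    exact SB_trans (SB_symm hnd) hsb
  | hideOut hstep hn =>
    rename_i p'
    have hres : Trans env (Proc.restrict p AH) a (Proc.restrict p' AH) :=
      Trans.res hstep hn
    rcases SB_isBranching.2 _ _ hsb a _ hres with ⟨ha', hsb'⟩ | ⟨s2b, s2', t1, t2, t3, t4⟩
    · subst ha'
      exact Or.inl ⟨rfl, hR _ _ ⟨p', q, rfl, rfl, reach_trans_step hrp hstep, hrq, hsb'⟩⟩
    · rcases taustar_restrict_inv t1 with ⟨qb, rfl, hqb⟩
      cases t2 with
      | res hstep2 hn2 =>
        rename_i q'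
        refine Or.inr ⟨Proc.hide qb AH, Proc.hide q' AH, taustar_hide_lift hqb,
          Trans.hideOut hstep2 hn2, ?_, ?_⟩
        · exact hR _ _ ⟨p, qb, rfl, rfl, hrp, reach_taustar hrq hqb, t3⟩
        · exact hR _ _ ⟨p', q', rfl, rfl, reach_trans_step hrp hstep,
            reach_trans_step (reach_taustar hrq hqb) hstep2, t4⟩

end ProcAux

/-- Lemma 4.6(2). -/
theorem sbrndc_restrict_to_hide {A C : Type} (env : C → Proc A C)
    (hguard : ∀ c, Guarded (env c)) (AH : Set A) (P1 P2 : Proc A C)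
    (h1 : SBrNDC env AH P1) (h2 : SBrNDC env AH P2)
    (h : BrBisim (Trans env) (Proc.restrict P1 AH) (Proc.restrict P2 AH)) :
    BrBisim (Trans env) (Proc.hide P1 AH) (Proc.hide P2 AH) := by
  set B : Proc A C → Proc A C → Prop := fun u v =>
    HCore env AH P1 P2 u v ∨ HCore env AH P2 P1 u v with hBdef
  refine ⟨B, ⟨?_, ?_⟩, Or.inl ⟨P1, P2, rfl, rfl, Relation.ReflTransGen.refl,
    Relation.ReflTransGen.refl, brBisim_iff_SB.mp h⟩⟩
  · intro x y hxy
    rcases hxy with ⟨p, q, hx, hy, r1, r2, hsb⟩ | ⟨p, q, hx, hy, r1, r2, hsb⟩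
    · exact Or.inr ⟨q, p, hy, hx, r2, r1, SB_symm hsb⟩
    · exact Or.inl ⟨q, p, hy, hx, r2, r1, SB_symm hsb⟩
  · intro s1 s2 hs a s1' ht
    rcases hs with hc | hc
    · exact hcore_transfer h1 B (fun u v h => Or.inl h) hc ht
    · exact hcore_transfer h2 B (fun u v h => Or.inr h) hc ht

end SecurityNI
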